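/- Let n ≥ 1 and let M : Fin n → Fin n → ℝ be a matrix with the inverse Monge property, i.e., M i j + M r k ≥ M r j + M i k whenever i ≤ r and j ≤ k. Then for every permutation σ of Fin n, ∑_{i} M i (σ i) ≤ ∑_{i} M i i; that is, the identity permutation maximizes the trace tr(Πᵀ M) over all permutation matrices Π. -/

import Mathlib

/-- If `M` has the inverse Monge property, then the identity permutation
maximizes the assignment value `∑ i, M i (σ i)` over all permutations `σ`. -/
theorem inverse_monge_identity_optimal (n : ℕ) (hn : 1 ≤ n) (M : Fin n → Fin n → ℝ)
    (hM : ∀ i r j k : Fin n, i ≤ r → j ≤ k → M i j + M r k ≥ M r j + M i k) :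
    ∀ σ : Equiv.Perm (Fin n), ∑ i, M i (σ i) ≤ ∑ i, M i i := by
  suffices H : ∀ N : ℕ, ∀ σ : Equiv.Perm (Fin n), σ.support.card ≤ N →
      ∑ i, M i (σ i) ≤ ∑ i, M i i by
    intro σ; exact H _ σ le_rfl
  intro N
  induction N with
  | zero =>
    intro σ hσ
    have : σ.support = ∅ := Finset.card_eq_zero.mp (Nat.le_zero.mp hσ)
    have hσ1 : σ = 1 := Equiv.Perm.support_eq_empty_iff.mp this
    simp [hσ1]
  | succ N ih =>
    intro σ hσ
    by_cases hσ1 : σ = 1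
    · simp [hσ1]
    · have hne : σ.support.Nonempty := by
        rw [Finset.nonempty_iff_ne_empty]
        simpa [Equiv.Perm.support_eq_empty_iff] using hσ1
      set m : Fin n := σ.support.max' hne with hm_def
      have hm_mem : m ∈ σ.support := σ.support.max'_mem hne
      have hσm_ne : σ m ≠ m := Equiv.Perm.mem_support.mp hm_mem
      set k : Fin n := σ⁻¹ m with hk_def
      have hσk : σ k = m := σ.apply_symm_apply m
      have hk_ne : k ≠ m := by
        intro h
        exact hσm_ne (by rw [← h, hσk, h])
      have hk_mem : k ∈ σ.support := by
        rw [Equiv.Perm.mem_support, hσk]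
        exact fun h => hk_ne h.symm
      have hkm : k < m := lt_of_le_of_ne (σ.support.le_max' k hk_mem) hk_ne
      have hσm_mem : σ m ∈ σ.support := Equiv.Perm.apply_mem_support.mpr hm_mem
      have hσm_lt : σ m < m := lt_of_le_of_ne (σ.support.le_max' _ hσm_mem) hσm_ne
      set σ' : Equiv.Perm (Fin n) := σ * Equiv.swap k m with hσ'_def
      have hσ'k : σ' k = σ m := by
        simp [hσ'_def, Equiv.Perm.mul_apply, Equiv.swap_apply_left]
      have hσ'm : σ' m = m := by
        simp [hσ'_def, Equiv.Perm.mul_apply, Equiv.swap_apply_right, hσk]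
      have hσ'x : ∀ x, x ≠ k → x ≠ m → σ' x = σ x := by
        intro x hx1 hx2
        simp [hσ'_def, Equiv.Perm.mul_apply, Equiv.swap_apply_of_ne_of_ne hx1 hx2]
      -- support of σ' is contained in support σ minus m
      have hsub : σ'.support ⊆ σ.support.erase m := by
        intro x hx
        rw [Equiv.Perm.mem_support] at hx
        have hxm : x ≠ m := by
          intro h; rw [h, hσ'm] at hx; exact hx rfl
        rw [Finset.mem_erase]
        refine ⟨hxm, ?_⟩
        by_cases hxk : x = k
        · rw [hxk]; exact hk_mem
        · rw [Equiv.Perm.mem_support, ← hσ'x x hxk hxm]; exact hx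
      have hcard : σ'.support.card ≤ N := by
        have h1 := Finset.card_le_card hsub
        rw [Finset.card_erase_of_mem hm_mem] at h1
        omega
      have hstep : ∑ i, M i (σ i) ≤ ∑ i, M i (σ' i) := by
        have key : ∀ f : Fin n → ℝ,
            ∑ i, f i = f k + (f m + ∑ i ∈ (Finset.univ.erase k).erase m, f i) := by
          intro f
          rw [← Finset.add_sum_erase _ f (Finset.mem_univ k),
            ← Finset.add_sum_erase _ f (Finset.mem_erase.mpr ⟨hk_ne.symm, Finset.mem_univ m⟩)]
        rw [key (fun i => M i (σ i)), key (fun i => M i (σ' i))]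
        have hsame : ∑ i ∈ (Finset.univ.erase k).erase m, M i (σ' i)
            = ∑ i ∈ (Finset.univ.erase k).erase m, M i (σ i) := by
          apply Finset.sum_congr rfl
          intro x hx
          rw [Finset.mem_erase, Finset.mem_erase] at hx
          rw [hσ'x x hx.2.1 hx.1]
        rw [hsame, hσ'k, hσ'm, hσk]
        have := hM k m (σ m) m hkm.le hσm_lt.le
        linarith
      exact hstep.trans (ih σ' hcard)
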